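/- Define h : [0, 1/2] → ℝ by h(w) = (1/4)·ln((1 + 2w + 4w²)/(1 − 2w + 4w²)) − w. Then h(w) equals the real part of f_0 at the point v = −1/2 + w·e^{−iπ/3}, i.e. h(w) = (1/2)·ln|(1/2 + w e^{−iπ/3})/(−1/2 + w e^{−iπ/3})| − 1 − 2·Re(−1/2 + w e^{−iπ/3}), and for all w ∈ (0, 1/2], h'(w) = −8w²(1 + 2w²)/((1 + 2w + 4w²)(1 − 2w + 4w²)) < 0. Consequently h is strictly decreasing on [0, 1/2], with its maximum at w = 0. -/

import Mathlib

/-- `h(w) = (1/4)·ln((1 + 2w + 4w²)/(1 - 2w + 4w²)) - w`, the real part of the steep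
descent exponent `f₀` along the segment `v = -1/2 + w·e^{-iπ/3}`. -/
noncomputable def h (w : ℝ) : ℝ :=
  (1 / 4) * Real.log ((1 + 2 * w + 4 * w ^ 2) / (1 - 2 * w + 4 * w ^ 2)) - w

lemma hP_pos (w : ℝ) : 0 < 1 + 2 * w + 4 * w ^ 2 := by nlinarith [sq_nonneg (2 * w + 1/2)]

lemma hQ_pos (w : ℝ) : 0 < 1 - 2 * w + 4 * w ^ 2 := by nlinarith [sq_nonneg (2 * w - 1/2)]

lemma h_eq (w : ℝ) :
    h w = (1 / 4) * (Real.log (1 + 2 * w + 4 * w ^ 2) - Real.log (1 - 2 * w + 4 * w ^ 2)) - w := by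
  rw [h, Real.log_div (hP_pos w).ne' (hQ_pos w).ne']

lemma h_hasDerivAt (w : ℝ) :
    HasDerivAt h (-8 * w ^ 2 * (1 + 2 * w ^ 2) /
      ((1 + 2 * w + 4 * w ^ 2) * (1 - 2 * w + 4 * w ^ 2))) w := by
  have hP : HasDerivAt (fun w : ℝ => 1 + 2 * w + 4 * w ^ 2) (2 + 8 * w) w := by
    have := ((hasDerivAt_const w (1:ℝ)).add ((hasDerivAt_id w).const_mul 2)).add
      ((hasDerivAt_pow 2 w).const_mul 4)
    exact this.congr_deriv (by push_cast; ring)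
  have hQ : HasDerivAt (fun w : ℝ => 1 - 2 * w + 4 * w ^ 2) (-2 + 8 * w) w := by
    have := ((hasDerivAt_const w (1:ℝ)).sub ((hasDerivAt_id w).const_mul 2)).add
      ((hasDerivAt_pow 2 w).const_mul 4)
    exact this.congr_deriv (by push_cast; ring)
  have hlogP := (Real.hasDerivAt_log (hP_pos w).ne').comp w hP
  have hlogQ := (Real.hasDerivAt_log (hQ_pos w).ne').comp w hQ
  have hfull := ((hlogP.sub hlogQ).const_mul (1/4 : ℝ)).sub (hasDerivAt_id w)
  have heq : ((fun y : ℝ => (1/4 : ℝ) *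
      ((Real.log ∘ fun w => 1 + 2 * w + 4 * w ^ 2) -
        (Real.log ∘ fun w => 1 - 2 * w + 4 * w ^ 2)) y) - id) = h := by
    funext x
    simp only [Pi.sub_apply, Function.comp, id_eq]
    rw [h_eq x]
  rw [heq] at hfull
  refine hfull.congr_deriv ?_
  have h1 := (hP_pos w).ne'
  have h2 := (hQ_pos w).ne'
  field_simp
  ring

/-- `h(w)` equals `Re f₀(-1/2 + w e^{-iπ/3})
= (1/2)·ln|(1/2 + w e^{-iπ/3})/(-1/2 + w e^{-iπ/3})| - 1 - 2·Re(-1/2 + w e^{-iπ/3})`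
on `[0, 1/2]`; for `w ∈ (0, 1/2]` its derivative is
`h'(w) = -8w²(1 + 2w²)/((1 + 2w + 4w²)(1 - 2w + 4w²)) < 0`; consequently `h` is strictly
decreasing on `[0, 1/2]`, with its maximum at `w = 0`. -/
theorem statement13 :
    (∀ w ∈ Set.Icc (0 : ℝ) (1 / 2),
        h w = (1 / 2) * Real.log (‖
            ((1 / 2 + (w : ℂ) * Complex.exp (-Complex.I * Real.pi / 3)) /
              (-1 / 2 + (w : ℂ) * Complex.exp (-Complex.I * Real.pi / 3)))‖) - 1 -
          2 * ((-1 / 2 : ℂ) + (w : ℂ) * Complex.exp (-Complex.I * Real.pi / 3)).re) ∧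
    (∀ w ∈ Set.Ioc (0 : ℝ) (1 / 2),
        deriv h w = -8 * w ^ 2 * (1 + 2 * w ^ 2) /
            ((1 + 2 * w + 4 * w ^ 2) * (1 - 2 * w + 4 * w ^ 2)) ∧
          deriv h w < 0) ∧
    StrictAntiOn h (Set.Icc 0 (1 / 2)) ∧
    (∀ w ∈ Set.Ioc (0 : ℝ) (1 / 2), h w < h 0) := by
  have hre : (Complex.exp (-Complex.I * Real.pi / 3)).re = 1/2 := by
    simp [Complex.exp_re, Complex.div_im, Complex.div_re, neg_div, Real.cos_pi_div_three]
  have him : (Complex.exp (-Complex.I * Real.pi / 3)).im = -(Real.sqrt 3/2) := by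
    simp [Complex.exp_im, Complex.div_im, Complex.div_re, neg_div, Real.sin_pi_div_three]
  have h3 : Real.sqrt 3 ^ 2 = 3 := Real.sq_sqrt (by norm_num)
  have part1 : ∀ w ∈ Set.Icc (0 : ℝ) (1 / 2),
      h w = (1 / 2) * Real.log (‖
          ((1 / 2 + (w : ℂ) * Complex.exp (-Complex.I * Real.pi / 3)) /
            (-1 / 2 + (w : ℂ) * Complex.exp (-Complex.I * Real.pi / 3)))‖) - 1 -
        2 * ((-1 / 2 : ℂ) + (w : ℂ) * Complex.exp (-Complex.I * Real.pi / 3)).re := by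
    intro w _
    set e := Complex.exp (-Complex.I * Real.pi / 3) with he
    set num : ℂ := 1 / 2 + (w : ℂ) * e with hnum
    set den : ℂ := -1 / 2 + (w : ℂ) * e with hden
    have hnsqnum : Complex.normSq num = (1 + 2 * w + 4 * w ^ 2) / 4 := by
      rw [hnum]
      simp only [Complex.normSq_apply, Complex.add_re, Complex.add_im, Complex.mul_re,
        Complex.mul_im, Complex.div_re, Complex.div_im, Complex.one_re, Complex.one_im,
        Complex.ofReal_re, Complex.ofReal_im, hre, him]
      norm_num
      nlinarith [h3]
    have hnsqden : Complex.normSq den = (1 - 2 * w + 4 * w ^ 2) / 4 := by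
      rw [hden]
      simp only [Complex.normSq_apply, Complex.add_re, Complex.add_im, Complex.mul_re,
        Complex.mul_im, Complex.div_re, Complex.div_im, Complex.neg_re, Complex.neg_im,
        Complex.one_re, Complex.one_im, Complex.ofReal_re, Complex.ofReal_im, hre, him]
      norm_num
      nlinarith [h3]
    have hnum0 : num ≠ 0 := by
      intro hc
      rw [hc, Complex.normSq_zero] at hnsqnum
      nlinarith [hP_pos w]
    have hden0 : den ≠ 0 := by
      intro hc
      rw [hc, Complex.normSq_zero] at hnsqden
      nlinarith [hQ_pos w]
    have hlog : Real.log ‖num / den‖ =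
        (1/2) * (Real.log ((1 + 2 * w + 4 * w ^ 2) / 4) -
          Real.log ((1 - 2 * w + 4 * w ^ 2) / 4)) := by
      rw [norm_div, Real.log_div (by simpa using hnum0) (by simpa using hden0),
        Complex.norm_def, Complex.norm_def, Real.log_sqrt (Complex.normSq_nonneg _),
        Real.log_sqrt (Complex.normSq_nonneg _), hnsqnum, hnsqden]
      ring
    have hrepart : ((-1 / 2 : ℂ) + (w : ℂ) * e).re = -1/2 + w/2 := by
      simp [Complex.add_re, Complex.mul_re, hre, him]
      ring
    rw [hlog, hrepart, h_eq w,
      Real.log_div (hP_pos w).ne' (by norm_num : (4:ℝ) ≠ 0),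
      Real.log_div (hQ_pos w).ne' (by norm_num : (4:ℝ) ≠ 0)]
    ring
  have part2 : ∀ w ∈ Set.Ioc (0 : ℝ) (1 / 2),
      deriv h w = -8 * w ^ 2 * (1 + 2 * w ^ 2) /
          ((1 + 2 * w + 4 * w ^ 2) * (1 - 2 * w + 4 * w ^ 2)) ∧ deriv h w < 0 := by
    intro w hw
    have hd := (h_hasDerivAt w).deriv
    refine ⟨hd, ?_⟩
    rw [hd]
    apply div_neg_of_neg_of_pos
    · nlinarith [hw.1, sq_nonneg w]
    · exact mul_pos (hP_pos w) (hQ_pos w)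
  have hcont : Continuous h := by
    have hlogPc : Continuous fun w : ℝ => Real.log (1 + 2 * w + 4 * w ^ 2) :=
      Continuous.log (by continuity) fun x => (hP_pos x).ne'
    have hlogQc : Continuous fun w : ℝ => Real.log (1 - 2 * w + 4 * w ^ 2) :=
      Continuous.log (by continuity) fun x => (hQ_pos x).ne'
    have : Continuous fun w : ℝ => (1/4 : ℝ) *
        (Real.log (1 + 2 * w + 4 * w ^ 2) - Real.log (1 - 2 * w + 4 * w ^ 2)) - w :=
      (continuous_const.mul (hlogPc.sub hlogQc)).sub continuous_id
    have heq : (fun w : ℝ => (1/4 : ℝ) *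
        (Real.log (1 + 2 * w + 4 * w ^ 2) - Real.log (1 - 2 * w + 4 * w ^ 2)) - w) = h := by
      funext x; rw [h_eq x]
    rwa [heq] at this
  have anti : StrictAntiOn h (Set.Icc 0 (1 / 2)) := by
    apply strictAntiOn_of_deriv_neg (convex_Icc _ _) hcont.continuousOn
    intro x hx
    rw [interior_Icc] at hx
    exact (part2 x ⟨hx.1, hx.2.le⟩).2
  refine ⟨part1, part2, anti, fun w hw => ?_⟩
  exact anti (Set.left_mem_Icc.mpr (by norm_num)) ⟨hw.1.le, hw.2⟩ hw.1
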